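/- Fix an integer b ≥ 2 and let x, y ∈ [0,1). Let i ∈ ℕ and set h_i = ⌊b^i·min(x,y)⌋·b^{-i} and h_{i+1} = ⌊b^{i+1}·min(x,y)⌋·b^{-i-1}. Then V_i(x,y) = (b−1)·min(x,y)/b^{i+1} if γ_b(x,y) < i; V_i(x,y) = x·y − h_i·(x + y − h_i − b^{-i}) − min(x,y)/b^{i+1} if γ_b(x,y) = i; and V_i(x,y) = h_{i+1}·(x + y − h_{i+1} − b^{-i-1}) − h_i·(x + y − h_i − b^{-i}) if γ_b(x,y) > i (where γ_b(x,x) = ∞ is regarded as > i). -/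

import Mathlib

open MeasureTheory
open scoped Classical

noncomputable def gammaB (b : ℕ) (x y : ℝ) : ℕ∞ :=
  if x = y then ⊤
  else (↑(sInf {i : ℕ | ⌊(b : ℝ) ^ i * x⌋ = ⌊(b : ℝ) ^ i * y⌋ ∧
      ⌊(b : ℝ) ^ (i + 1) * x⌋ ≠ ⌊(b : ℝ) ^ (i + 1) * y⌋}) : ℕ∞)

def Dset (b : ℕ) (i : ℕ) : Set (ℝ × ℝ) :=
  {p | p.1 ∈ Set.Ico (0 : ℝ) 1 ∧ p.2 ∈ Set.Ico (0 : ℝ) 1 ∧ gammaB b p.1 p.2 = (i : ℕ∞)}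

noncomputable def Vi (b : ℕ) (i : ℕ) (x y : ℝ) : ℝ :=
  (volume ((Set.Ico (0 : ℝ) x ×ˢ Set.Ico (0 : ℝ) y) ∩ Dset b i)).toReal

/-! ### Auxiliary lemmas -/

private lemma floor_div_nat_cast (r : ℝ) (n : ℕ) (hn : 0 < n) :
    ⌊r / n⌋ = ⌊((⌊r⌋ : ℝ)) / n⌋ := by
  have hn' : (0:ℝ) < n := Nat.cast_pos.mpr hn
  set k := ⌊((⌊r⌋:ℝ)) / n⌋ with hk
  have h1 : (k:ℝ) ≤ (⌊r⌋:ℝ) / n := Int.floor_le _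
  have h2 : (⌊r⌋:ℝ) / n < k + 1 := Int.lt_floor_add_one _
  have h1' : (k:ℝ) * n ≤ (⌊r⌋:ℝ) := by rwa [le_div_iff₀ hn'] at h1
  have h2' : (⌊r⌋:ℝ) < ((k:ℝ)+1) * n := by rwa [div_lt_iff₀ hn'] at h2
  have h2i : ⌊r⌋ < (k+1) * (n:ℤ) := by exact_mod_cast h2'
  have h2i' : ⌊r⌋ + 1 ≤ (k+1) * (n:ℤ) := h2i
  apply Int.floor_eq_iff.mpr
  constructor
  · rw [le_div_iff₀ hn']
    exact h1'.trans (Int.floor_le r)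
  · rw [div_lt_iff₀ hn']
    calc r < (⌊r⌋:ℝ) + 1 := Int.lt_floor_add_one r
    _ ≤ ((k:ℝ)+1) * n := by exact_mod_cast h2i'

private lemma agree_succ (b : ℕ) (hb : 2 ≤ b) (u v : ℝ) (j : ℕ)
    (h : ⌊(b:ℝ)^(j+1) * u⌋ = ⌊(b:ℝ)^(j+1) * v⌋) :
    ⌊(b:ℝ)^j * u⌋ = ⌊(b:ℝ)^j * v⌋ := by
  have hb0 : (0:ℝ) < b := by positivity
  have e : ∀ w : ℝ, (b:ℝ)^j * w = ((b:ℝ)^(j+1) * w) / b := by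
    intro w; field_simp; ring
  rw [e u, e v, floor_div_nat_cast ((b:ℝ)^(j+1)*u) b (by omega),
    floor_div_nat_cast ((b:ℝ)^(j+1)*v) b (by omega), h]

private lemma agree_le (b : ℕ) (hb : 2 ≤ b) (u v : ℝ) {j i : ℕ} (hji : j ≤ i)
    (h : ⌊(b:ℝ)^i * u⌋ = ⌊(b:ℝ)^i * v⌋) :
    ⌊(b:ℝ)^j * u⌋ = ⌊(b:ℝ)^j * v⌋ := by
  induction i with
  | zero => simpa [Nat.le_zero.mp hji] using h
  | succ n ih =>
    rcases Nat.lt_or_ge j (n+1) with hlt | hge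
    · exact ih (by omega) (agree_succ b hb u v n h)
    · have : j = n + 1 := le_antisymm hji hge
      rw [this]; exact h

private lemma exists_disagree (b : ℕ) (hb : 2 ≤ b) {u v : ℝ} (h : u ≠ v) :
    ∃ j : ℕ, ⌊(b:ℝ)^j * u⌋ ≠ ⌊(b:ℝ)^j * v⌋ := by
  have hb1 : (1:ℝ) < b := by
    have : (2:ℝ) ≤ b := by exact_mod_cast hb
    linarith
  obtain ⟨j, hj⟩ := pow_unbounded_of_one_lt (1 / |u - v|) hb1
  refine ⟨j, fun hfl => ?_⟩
  have hpos : 0 < |u - v| := abs_pos.mpr (sub_ne_zero.mpr h)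
  have hBpos : (0:ℝ) < (b:ℝ)^j := by positivity
  have h1 : 1 < (b:ℝ)^j * |u - v| := (div_lt_iff₀ hpos).mp hj
  have habs : |(b:ℝ)^j * u - (b:ℝ)^j * v| = (b:ℝ)^j * |u - v| := by
    rw [← mul_sub, abs_mul, abs_of_pos hBpos]
  have hlt1 : |(b:ℝ)^j * u - (b:ℝ)^j * v| < 1 := by
    have a1 := Int.lt_floor_add_one ((b:ℝ)^j * u)
    have a2 := Int.floor_le ((b:ℝ)^j * u)
    have a3 := Int.lt_floor_add_one ((b:ℝ)^j * v)
    have a4 := Int.floor_le ((b:ℝ)^j * v)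
    rw [hfl] at a1 a2
    rw [abs_lt]; constructor <;> linarith
  rw [habs] at hlt1
  linarith

private lemma gamma_eq_iff (b : ℕ) (hb : 2 ≤ b) {u v : ℝ}
    (hu : u ∈ Set.Ico (0:ℝ) 1) (hv : v ∈ Set.Ico (0:ℝ) 1) (i : ℕ) :
    gammaB b u v = (i : ℕ∞) ↔
      (⌊(b:ℝ)^i * u⌋ = ⌊(b:ℝ)^i * v⌋ ∧ ⌊(b:ℝ)^(i+1) * u⌋ ≠ ⌊(b:ℝ)^(i+1) * v⌋) := by
  constructor
  · intro hg
    by_cases huv : u = v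
    · rw [gammaB, if_pos huv] at hg
      exact absurd hg (by simp)
    · rw [gammaB, if_neg huv] at hg
      have hgi : sInf {i : ℕ | ⌊(b : ℝ) ^ i * u⌋ = ⌊(b : ℝ) ^ i * v⌋ ∧
          ⌊(b : ℝ) ^ (i + 1) * u⌋ ≠ ⌊(b : ℝ) ^ (i + 1) * v⌋} = i := by exact_mod_cast hg
      obtain ⟨N, hN⟩ := exists_disagree b hb huv
      have hP : ∃ n : ℕ, ⌊(b:ℝ)^n * u⌋ ≠ ⌊(b:ℝ)^n * v⌋ := ⟨N, hN⟩
      have hM : ⌊(b:ℝ)^(Nat.find hP) * u⌋ ≠ ⌊(b:ℝ)^(Nat.find hP) * v⌋ := Nat.find_spec hP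
      have hM0 : Nat.find hP ≠ 0 := by
        intro h0
        apply hM
        rw [h0]
        simp only [pow_zero, one_mul]
        rw [Int.floor_eq_zero_iff.mpr hu, Int.floor_eq_zero_iff.mpr hv]
      obtain ⟨M', hM'⟩ := Nat.exists_eq_succ_of_ne_zero hM0
      rw [hM'] at hM
      have hagree : ⌊(b:ℝ)^M' * u⌋ = ⌊(b:ℝ)^M' * v⌋ :=
        not_not.mp (Nat.find_min hP (by omega))
      have hne : Set.Nonempty {i : ℕ | ⌊(b : ℝ) ^ i * u⌋ = ⌊(b : ℝ) ^ i * v⌋ ∧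
          ⌊(b : ℝ) ^ (i + 1) * u⌋ ≠ ⌊(b : ℝ) ^ (i + 1) * v⌋} := ⟨M', hagree, hM⟩
      have := Nat.sInf_mem hne
      rw [hgi] at this
      exact this
  · rintro ⟨h1, h2⟩
    have huv : u ≠ v := fun e => h2 (by rw [e])
    rw [gammaB, if_neg huv]
    have : sInf {i : ℕ | ⌊(b : ℝ) ^ i * u⌋ = ⌊(b : ℝ) ^ i * v⌋ ∧
        ⌊(b : ℝ) ^ (i + 1) * u⌋ ≠ ⌊(b : ℝ) ^ (i + 1) * v⌋} = i := by
      apply le_antisymm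
      · exact Nat.sInf_le ⟨h1, h2⟩
      · have hne : Set.Nonempty {i : ℕ | ⌊(b : ℝ) ^ i * u⌋ = ⌊(b : ℝ) ^ i * v⌋ ∧
            ⌊(b : ℝ) ^ (i + 1) * u⌋ ≠ ⌊(b : ℝ) ^ (i + 1) * v⌋} := ⟨i, h1, h2⟩
        apply le_csInf hne
        intro j hj
        by_contra hji
        push_neg at hji
        exact hj.2 (agree_le b hb u v (by omega) h1)
    exact_mod_cast congrArg (Nat.cast : ℕ → ℕ∞) this

/-- The "agree at level j" set. -/
def Aset (b : ℕ) (j : ℕ) : Set (ℝ × ℝ) :=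
  {p : ℝ × ℝ | ⌊(b:ℝ)^j * p.1⌋ = ⌊(b:ℝ)^j * p.2⌋}

private lemma Aset_measurable (b j : ℕ) : MeasurableSet (Aset b j) := by
  have h1 : Measurable fun p : ℝ × ℝ => ⌊(b:ℝ)^j * p.1⌋ :=
    Int.measurable_floor.comp (measurable_fst.const_mul _)
  have h2 : Measurable fun p : ℝ × ℝ => ⌊(b:ℝ)^j * p.2⌋ :=
    Int.measurable_floor.comp (measurable_snd.const_mul _)
  exact measurableSet_eq_fun h1 h2

set_option maxHeartbeats 1000000 in
/-- Key volume computation for the agree-set intersected with a rectangle. -/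
private lemma volT (b j : ℕ) (hb : 2 ≤ b) {x y : ℝ}
    (hx : x ∈ Set.Ico (0:ℝ) 1) (hy : y ∈ Set.Ico (0:ℝ) 1) :
    (volume ((Set.Ico (0:ℝ) x ×ˢ Set.Ico (0:ℝ) y) ∩ Aset b j)).toReal
      = (⌊(b:ℝ)^j * min x y⌋ : ℝ) / ((b:ℝ)^j * (b:ℝ)^j)
        + (min x (((⌊(b:ℝ)^j * min x y⌋ : ℝ) + 1) / (b:ℝ)^j)
            - (⌊(b:ℝ)^j * min x y⌋ : ℝ) / (b:ℝ)^j)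
          * (min y (((⌊(b:ℝ)^j * min x y⌋ : ℝ) + 1) / (b:ℝ)^j)
            - (⌊(b:ℝ)^j * min x y⌋ : ℝ) / (b:ℝ)^j) := by
  have hB : (0:ℝ) < (b:ℝ)^j := by positivity
  set B := (b:ℝ)^j with hBdef
  set m := min x y with hmdef
  have hm0 : 0 ≤ m := le_min hx.1 hy.1
  have hmx : m ≤ x := min_le_left x y
  have hmy : m ≤ y := min_le_right x y
  have hKnn : 0 ≤ ⌊B * m⌋ := Int.floor_nonneg.mpr (mul_nonneg hB.le hm0)
  set K : ℕ := (⌊B * m⌋).toNat with hKdef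
  have hKz : (K:ℤ) = ⌊B * m⌋ := Int.toNat_of_nonneg hKnn
  have hKr : (K:ℝ) = ((⌊B * m⌋ : ℤ) : ℝ) := by exact_mod_cast congrArg (Int.cast : ℤ → ℝ) hKz
  have hKle : (K:ℝ) / B ≤ m := by
    rw [div_le_iff₀ hB, hKr]
    calc ((⌊B * m⌋ : ℤ) : ℝ) ≤ B * m := Int.floor_le _
      _ = m * B := mul_comm _ _
  set F : ℕ → Set (ℝ × ℝ) := fun k =>
    Set.Ico ((k:ℝ)/B) (min x (((k:ℝ)+1)/B)) ×ˢ Set.Ico ((k:ℝ)/B) (min y (((k:ℝ)+1)/B)) with hF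
  have hTeq : (Set.Ico (0:ℝ) x ×ˢ Set.Ico (0:ℝ) y) ∩ Aset b j
      = ⋃ k ∈ Finset.range (K+1), F k := by
    ext p
    simp only [Set.mem_inter_iff, Set.mem_prod, Set.mem_Ico, Aset, Set.mem_setOf_eq,
      Set.mem_iUnion, Finset.mem_range, hF]
    constructor
    · rintro ⟨⟨⟨h10, h1x⟩, h20, h2y⟩, hfl⟩
      have hn0 : 0 ≤ ⌊B * p.1⌋ := Int.floor_nonneg.mpr (mul_nonneg hB.le h10)
      have hcast : ((⌊B * p.1⌋.toNat : ℕ) : ℝ) = ((⌊B * p.1⌋ : ℤ) : ℝ) := by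
        exact_mod_cast congrArg (Int.cast : ℤ → ℝ) (Int.toNat_of_nonneg hn0)
      have hfloor1 : ((⌊B * p.1⌋ : ℤ) : ℝ) ≤ B * p.1 := Int.floor_le _
      have hfloor2 : B * p.1 < ((⌊B * p.1⌋ : ℤ) : ℝ) + 1 := Int.lt_floor_add_one _
      have hfloor3 : ((⌊B * p.1⌋ : ℤ) : ℝ) ≤ B * p.2 := by rw [hfl]; exact Int.floor_le _
      have hfloor4 : B * p.2 < ((⌊B * p.1⌋ : ℤ) : ℝ) + 1 := by rw [hfl]; exact Int.lt_floor_add_one _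
      refine ⟨(⌊B * p.1⌋).toNat, ?_, ⟨?_, ?_⟩, ?_, ?_⟩
      · have hle : ⌊B * p.1⌋ ≤ ⌊B * m⌋ := by
          rcases min_cases x y with ⟨he, _⟩ | ⟨he, _⟩
          · rw [hmdef, he]
            exact Int.floor_le_floor (by have := mul_le_mul_of_nonneg_left h1x.le hB.le; linarith)
          · rw [hmdef, he, hfl]
            exact Int.floor_le_floor (by have := mul_le_mul_of_nonneg_left h2y.le hB.le; linarith)
        omega
      · rw [div_le_iff₀ hB, hcast]; linarith [mul_comm B p.1]
      · rw [lt_min_iff]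
        refine ⟨h1x, ?_⟩
        rw [lt_div_iff₀ hB, hcast]; linarith [mul_comm B p.1]
      · rw [div_le_iff₀ hB, hcast]; linarith [mul_comm B p.2]
      · rw [lt_min_iff]
        refine ⟨h2y, ?_⟩
        rw [lt_div_iff₀ hB, hcast]; linarith [mul_comm B p.2]
    · rintro ⟨k, hk, ⟨⟨h1a, h1b⟩, h2a, h2b⟩⟩
      have hkB : (0:ℝ) ≤ (k:ℝ)/B := by positivity
      have h1x : p.1 < x := lt_of_lt_of_le h1b (min_le_left _ _)
      have h2y : p.2 < y := lt_of_lt_of_le h2b (min_le_left _ _)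
      have h1b' : p.1 < ((k:ℝ)+1)/B := lt_of_lt_of_le h1b (min_le_right _ _)
      have h2b' : p.2 < ((k:ℝ)+1)/B := lt_of_lt_of_le h2b (min_le_right _ _)
      have e1 : ⌊B * p.1⌋ = (k:ℤ) := by
        have c1 := (div_le_iff₀ hB).mp h1a
        have c2 := (lt_div_iff₀ hB).mp h1b'
        apply Int.floor_eq_iff.mpr
        constructor
        · push_cast; linarith [mul_comm B p.1]
        · push_cast; linarith [mul_comm B p.1]
      have e2 : ⌊B * p.2⌋ = (k:ℤ) := by
        have c1 := (div_le_iff₀ hB).mp h2a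
        have c2 := (lt_div_iff₀ hB).mp h2b'
        apply Int.floor_eq_iff.mpr
        constructor
        · push_cast; linarith [mul_comm B p.2]
        · push_cast; linarith [mul_comm B p.2]
      exact ⟨⟨⟨le_trans hkB h1a, h1x⟩, le_trans hkB h2a, h2y⟩, by rw [e1, e2]⟩
  have hdisj : (↑(Finset.range (K+1)) : Set ℕ).PairwiseDisjoint F := by
    have key : ∀ k l : ℕ, k < l → Disjoint (F k) (F l) := by
      intro k l hkl
      simp only [hF]
      apply Set.disjoint_prod.mpr
      apply Or.inl
      apply Set.Ico_disjoint_Ico.mpr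
      have h2 : ((k:ℝ)+1)/B ≤ (l:ℝ)/B :=
        (div_le_div_iff_of_pos_right hB).mpr (by exact_mod_cast hkl)
      calc min (min x (((k:ℝ)+1)/B)) (min x (((l:ℝ)+1)/B))
          ≤ min x (((k:ℝ)+1)/B) := min_le_left _ _
        _ ≤ ((k:ℝ)+1)/B := min_le_right _ _
        _ ≤ (l:ℝ)/B := h2
        _ ≤ max ((k:ℝ)/B) ((l:ℝ)/B) := le_max_right _ _
    intro a _ c _ hac
    rcases hac.lt_or_gt with h | h
    · exact key a c h
    · exact (key c a h).symm
  have hmeas : ∀ k ∈ Finset.range (K+1), MeasurableSet (F k) :=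
    fun k _ => measurableSet_Ico.prod measurableSet_Ico
  have hvol : ∀ k : ℕ, volume (F k)
      = ENNReal.ofReal (min x (((k:ℝ)+1)/B) - (k:ℝ)/B)
        * ENNReal.ofReal (min y (((k:ℝ)+1)/B) - (k:ℝ)/B) := by
    intro k
    rw [hF]
    rw [Measure.volume_eq_prod, Measure.prod_prod, Real.volume_Ico, Real.volume_Ico]
  have hlen : ∀ k : ℕ, k ≤ K → 0 ≤ min x (((k:ℝ)+1)/B) - (k:ℝ)/B
      ∧ 0 ≤ min y (((k:ℝ)+1)/B) - (k:ℝ)/B := by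
    intro k hk
    have hkK : (k:ℝ)/B ≤ (K:ℝ)/B := (div_le_div_iff_of_pos_right hB).mpr (by exact_mod_cast hk)
    have hkm : (k:ℝ)/B ≤ m := hkK.trans hKle
    have hkk1 : (k:ℝ)/B ≤ ((k:ℝ)+1)/B := (div_le_div_iff_of_pos_right hB).mpr (by linarith)
    constructor
    · have : (k:ℝ)/B ≤ min x (((k:ℝ)+1)/B) := le_min (hkm.trans hmx) hkk1
      linarith
    · have : (k:ℝ)/B ≤ min y (((k:ℝ)+1)/B) := le_min (hkm.trans hmy) hkk1
      linarith
  have hterm : ∀ k ∈ Finset.range (K+1), (volume (F k)).toReal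
      = (min x (((k:ℝ)+1)/B) - (k:ℝ)/B) * (min y (((k:ℝ)+1)/B) - (k:ℝ)/B) := by
    intro k hk
    obtain ⟨c1, c2⟩ := hlen k (by have := Finset.mem_range.mp hk; omega)
    rw [hvol k, ENNReal.toReal_mul, ENNReal.toReal_ofReal c1, ENNReal.toReal_ofReal c2]
  calc (volume ((Set.Ico (0:ℝ) x ×ˢ Set.Ico (0:ℝ) y) ∩ Aset b j)).toReal
      = ∑ k ∈ Finset.range (K+1), (volume (F k)).toReal := by
        rw [hTeq, measure_biUnion_finset hdisj hmeas]
        exact ENNReal.toReal_sum (fun k _ => by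
          rw [hvol k]
          exact ENNReal.mul_ne_top ENNReal.ofReal_ne_top ENNReal.ofReal_ne_top)
    _ = ∑ k ∈ Finset.range (K+1),
          (min x (((k:ℝ)+1)/B) - (k:ℝ)/B) * (min y (((k:ℝ)+1)/B) - (k:ℝ)/B) :=
        Finset.sum_congr rfl hterm
    _ = (∑ k ∈ Finset.range K,
          (min x (((k:ℝ)+1)/B) - (k:ℝ)/B) * (min y (((k:ℝ)+1)/B) - (k:ℝ)/B))
        + (min x (((K:ℝ)+1)/B) - (K:ℝ)/B) * (min y (((K:ℝ)+1)/B) - (K:ℝ)/B) :=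
        Finset.sum_range_succ _ _
    _ = (∑ _k ∈ Finset.range K, 1/(B*B))
        + (min x (((K:ℝ)+1)/B) - (K:ℝ)/B) * (min y (((K:ℝ)+1)/B) - (K:ℝ)/B) := by
        congr 1
        apply Finset.sum_congr rfl
        intro k hk
        have hk' : k + 1 ≤ K := Nat.succ_le_of_lt (Finset.mem_range.mp hk)
        have hsucc : ((k:ℝ)+1)/B ≤ (K:ℝ)/B :=
          (div_le_div_iff_of_pos_right hB).mpr (by exact_mod_cast hk')
        have hsucc' : ((k:ℝ)+1)/B ≤ m := hsucc.trans hKle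
        rw [min_eq_right (hsucc'.trans hmx), min_eq_right (hsucc'.trans hmy)]
        field_simp
        ring
    _ = (K:ℝ) * (1/(B*B))
        + (min x (((K:ℝ)+1)/B) - (K:ℝ)/B) * (min y (((K:ℝ)+1)/B) - (K:ℝ)/B) := by
        rw [Finset.sum_const, Finset.card_range]
        simp
    _ = ((⌊B * m⌋ : ℤ) : ℝ) / (B * B)
        + (min x ((((⌊B * m⌋ : ℤ) : ℝ) + 1) / B) - ((⌊B * m⌋ : ℤ) : ℝ) / B)
          * (min y ((((⌊B * m⌋ : ℤ) : ℝ) + 1) / B) - ((⌊B * m⌋ : ℤ) : ℝ) / B) := by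
        rw [← hKr]
        ring

private lemma W_agree (b j : ℕ) (hb : 2 ≤ b) {x y : ℝ}
    (hx : x ∈ Set.Ico (0:ℝ) 1) (hy : y ∈ Set.Ico (0:ℝ) 1)
    (hag : ⌊(b:ℝ)^j * x⌋ = ⌊(b:ℝ)^j * y⌋) :
    (volume ((Set.Ico (0:ℝ) x ×ˢ Set.Ico (0:ℝ) y) ∩ Aset b j)).toReal
      = x * y - ((⌊(b:ℝ)^j * min x y⌋ : ℝ)/(b:ℝ)^j)
          * (x + y - (⌊(b:ℝ)^j * min x y⌋ : ℝ)/(b:ℝ)^j - 1/(b:ℝ)^j) := by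
  have hB : (0:ℝ) < (b:ℝ)^j := by positivity
  have hBne : ((b:ℝ)^j) ≠ 0 := ne_of_gt hB
  rw [volT b j hb hx hy]
  have hm : ⌊(b:ℝ)^j * min x y⌋ = ⌊(b:ℝ)^j * x⌋ := by
    rcases min_cases x y with ⟨he, _⟩ | ⟨he, _⟩
    · rw [he]
    · rw [he, hag]
  have hx1 : x < ((⌊(b:ℝ)^j * x⌋ : ℝ) + 1)/(b:ℝ)^j := by
    rw [lt_div_iff₀ hB]
    linarith [Int.lt_floor_add_one ((b:ℝ)^j * x), mul_comm ((b:ℝ)^j) x]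
  have hy1 : y < ((⌊(b:ℝ)^j * x⌋ : ℝ) + 1)/(b:ℝ)^j := by
    rw [lt_div_iff₀ hB]
    have h := Int.lt_floor_add_one ((b:ℝ)^j * y)
    rw [← hag] at h
    linarith [mul_comm ((b:ℝ)^j) y]
  rw [hm, min_eq_left hx1.le, min_eq_left hy1.le]
  field_simp
  ring

private lemma W_disagree (b j : ℕ) (hb : 2 ≤ b) {x y : ℝ}
    (hx : x ∈ Set.Ico (0:ℝ) 1) (hy : y ∈ Set.Ico (0:ℝ) 1)
    (hne : ⌊(b:ℝ)^j * x⌋ ≠ ⌊(b:ℝ)^j * y⌋) :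
    (volume ((Set.Ico (0:ℝ) x ×ˢ Set.Ico (0:ℝ) y) ∩ Aset b j)).toReal
      = min x y / (b:ℝ)^j := by
  have hB : (0:ℝ) < (b:ℝ)^j := by positivity
  have hBne : ((b:ℝ)^j) ≠ 0 := ne_of_gt hB
  rw [volT b j hb hx hy]
  rcases le_total x y with hxy | hxy
  · rw [min_eq_left hxy]
    have hx1 : x < ((⌊(b:ℝ)^j * x⌋ : ℝ) + 1)/(b:ℝ)^j := by
      rw [lt_div_iff₀ hB]
      linarith [Int.lt_floor_add_one ((b:ℝ)^j * x), mul_comm ((b:ℝ)^j) x]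
    have hyfl : ⌊(b:ℝ)^j * x⌋ + 1 ≤ ⌊(b:ℝ)^j * y⌋ := by
      have hle : ⌊(b:ℝ)^j * x⌋ ≤ ⌊(b:ℝ)^j * y⌋ :=
        Int.floor_le_floor (mul_le_mul_of_nonneg_left hxy hB.le)
      omega
    have hy1 : ((⌊(b:ℝ)^j * x⌋ : ℝ) + 1)/(b:ℝ)^j ≤ y := by
      rw [div_le_iff₀ hB]
      have h1 : ((⌊(b:ℝ)^j * x⌋ : ℝ) + 1) ≤ ((⌊(b:ℝ)^j * y⌋ : ℤ) : ℝ) := by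
        exact_mod_cast hyfl
      have h2 := Int.floor_le ((b:ℝ)^j * y)
      linarith [mul_comm ((b:ℝ)^j) y]
    rw [min_eq_left hx1.le, min_eq_right hy1]
    field_simp
    ring
  · rw [min_eq_right hxy]
    have hm : ⌊(b:ℝ)^j * min x y⌋ = ⌊(b:ℝ)^j * y⌋ := by rw [min_eq_right hxy]
    have hy1 : y < ((⌊(b:ℝ)^j * y⌋ : ℝ) + 1)/(b:ℝ)^j := by
      rw [lt_div_iff₀ hB]
      linarith [Int.lt_floor_add_one ((b:ℝ)^j * y), mul_comm ((b:ℝ)^j) y]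
    have hxfl : ⌊(b:ℝ)^j * y⌋ + 1 ≤ ⌊(b:ℝ)^j * x⌋ := by
      have hle : ⌊(b:ℝ)^j * y⌋ ≤ ⌊(b:ℝ)^j * x⌋ :=
        Int.floor_le_floor (mul_le_mul_of_nonneg_left hxy hB.le)
      omega
    have hx1 : ((⌊(b:ℝ)^j * y⌋ : ℝ) + 1)/(b:ℝ)^j ≤ x := by
      rw [div_le_iff₀ hB]
      have h1 : ((⌊(b:ℝ)^j * y⌋ : ℝ) + 1) ≤ ((⌊(b:ℝ)^j * x⌋ : ℤ) : ℝ) := by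
        exact_mod_cast hxfl
      have h2 := Int.floor_le ((b:ℝ)^j * x)
      linarith [mul_comm ((b:ℝ)^j) x]
    rw [min_eq_right hx1, min_eq_left hy1.le]
    field_simp
    ring

private lemma Vi_eq (b i : ℕ) (hb : 2 ≤ b) {x y : ℝ}
    (hx : x ∈ Set.Ico (0:ℝ) 1) (hy : y ∈ Set.Ico (0:ℝ) 1) :
    Vi b i x y = (volume ((Set.Ico (0:ℝ) x ×ˢ Set.Ico (0:ℝ) y) ∩ Aset b i)).toReal
      - (volume ((Set.Ico (0:ℝ) x ×ˢ Set.Ico (0:ℝ) y) ∩ Aset b (i+1))).toReal := by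
  set R := Set.Ico (0:ℝ) x ×ˢ Set.Ico (0:ℝ) y with hR
  have hsub : R ∩ Aset b (i+1) ⊆ R ∩ Aset b i :=
    Set.inter_subset_inter_right _ (fun p hp => agree_succ b hb p.1 p.2 i hp)
  have hDeq : R ∩ Dset b i = (R ∩ Aset b i) \ (R ∩ Aset b (i+1)) := by
    ext p
    constructor
    · rintro ⟨hpR, hp1, hp2, hg⟩
      obtain ⟨h1, h2⟩ := (gamma_eq_iff b hb hp1 hp2 i).mp hg
      exact ⟨⟨hpR, h1⟩, fun hc => h2 hc.2⟩
    · rintro ⟨⟨hpR, hA⟩, hn⟩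
      have h2 : ¬ p ∈ Aset b (i+1) := fun hc => hn ⟨hpR, hc⟩
      have hp1 : p.1 ∈ Set.Ico (0:ℝ) 1 := ⟨hpR.1.1, lt_of_lt_of_le hpR.1.2 hx.2.le⟩
      have hp2 : p.2 ∈ Set.Ico (0:ℝ) 1 := ⟨hpR.2.1, lt_of_lt_of_le hpR.2.2 hy.2.le⟩
      exact ⟨hpR, hp1, hp2, (gamma_eq_iff b hb hp1 hp2 i).mpr ⟨hA, h2⟩⟩
  have hRfin : volume R ≠ ⊤ := by
    rw [hR, Measure.volume_eq_prod, Measure.prod_prod]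
    exact ENNReal.mul_ne_top (by simp [Real.volume_Ico]) (by simp [Real.volume_Ico])
  have hfin : volume (R ∩ Aset b (i+1)) ≠ ⊤ :=
    ne_top_of_le_ne_top hRfin (measure_mono Set.inter_subset_left)
  have hfin' : volume (R ∩ Aset b i) ≠ ⊤ :=
    ne_top_of_le_ne_top hRfin (measure_mono Set.inter_subset_left)
  have hmeas : MeasurableSet (R ∩ Aset b (i+1)) :=
    (measurableSet_Ico.prod measurableSet_Ico).inter (Aset_measurable b (i+1))
  rw [Vi, ← hR, hDeq, measure_diff hsub hmeas.nullMeasurableSet hfin,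
    ENNReal.toReal_sub_of_le (measure_mono hsub) hfin']

private lemma gamma_lt_disagree (b : ℕ) (hb : 2 ≤ b) {x y : ℝ}
    (hx : x ∈ Set.Ico (0:ℝ) 1) (hy : y ∈ Set.Ico (0:ℝ) 1) {i : ℕ}
    (hlt : gammaB b x y < (i : ℕ∞)) (j : ℕ) (hij : i ≤ j) :
    ⌊(b:ℝ)^j * x⌋ ≠ ⌊(b:ℝ)^j * y⌋ := by
  have hxy : x ≠ y := by
    intro e
    rw [gammaB, if_pos e] at hlt
    exact not_top_lt hlt
  set n := sInf {i : ℕ | ⌊(b : ℝ) ^ i * x⌋ = ⌊(b : ℝ) ^ i * y⌋ ∧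
      ⌊(b : ℝ) ^ (i + 1) * x⌋ ≠ ⌊(b : ℝ) ^ (i + 1) * y⌋} with hn
  have hgn : gammaB b x y = (n : ℕ∞) := by rw [gammaB, if_neg hxy]
  have hni : n < i := by
    rw [hgn] at hlt
    exact_mod_cast hlt
  obtain ⟨_, h2⟩ := (gamma_eq_iff b hb hx hy n).mp hgn
  intro hagj
  exact h2 (agree_le b hb x y (by omega) hagj)

theorem stmt0 (b : ℕ) (hb : 2 ≤ b) (x y : ℝ)
    (hx : x ∈ Set.Ico (0 : ℝ) 1) (hy : y ∈ Set.Ico (0 : ℝ) 1) (i : ℕ)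
    (hi hip1 : ℝ)
    (hhi : hi = (⌊(b : ℝ) ^ i * min x y⌋ : ℝ) / (b : ℝ) ^ i)
    (hhip1 : hip1 = (⌊(b : ℝ) ^ (i + 1) * min x y⌋ : ℝ) / (b : ℝ) ^ (i + 1)) :
    (gammaB b x y < (i : ℕ∞) →
      Vi b i x y = ((b : ℝ) - 1) * min x y / (b : ℝ) ^ (i + 1)) ∧
    (gammaB b x y = (i : ℕ∞) →
      Vi b i x y = x * y - hi * (x + y - hi - 1 / (b : ℝ) ^ i) - min x y / (b : ℝ) ^ (i + 1)) ∧
    ((i : ℕ∞) < gammaB b x y →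
      Vi b i x y = hip1 * (x + y - hip1 - 1 / (b : ℝ) ^ (i + 1))
        - hi * (x + y - hi - 1 / (b : ℝ) ^ i)) := by
  have hbne : ((b:ℝ)) ≠ 0 := by positivity
  refine ⟨?_, ?_, ?_⟩
  · intro hlt
    have hdi := gamma_lt_disagree b hb hx hy hlt i le_rfl
    have hdi1 := gamma_lt_disagree b hb hx hy hlt (i+1) (by omega)
    rw [Vi_eq b i hb hx hy, W_disagree b i hb hx hy hdi, W_disagree b (i+1) hb hx hy hdi1,
      pow_succ]
    have hBne : ((b:ℝ)^i) ≠ 0 := by positivity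
    field_simp
  · intro heq
    obtain ⟨hag, hdis⟩ := (gamma_eq_iff b hb hx hy i).mp heq
    rw [Vi_eq b i hb hx hy, W_agree b i hb hx hy hag, W_disagree b (i+1) hb hx hy hdis, hhi]
  · intro hgt
    have hag1 : ⌊(b:ℝ)^(i+1) * x⌋ = ⌊(b:ℝ)^(i+1) * y⌋ := by
      by_cases hxy : x = y
      · rw [hxy]
      · set n := sInf {i : ℕ | ⌊(b : ℝ) ^ i * x⌋ = ⌊(b : ℝ) ^ i * y⌋ ∧
            ⌊(b : ℝ) ^ (i + 1) * x⌋ ≠ ⌊(b : ℝ) ^ (i + 1) * y⌋} with hn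
        have hgn : gammaB b x y = (n : ℕ∞) := by rw [gammaB, if_neg hxy]
        have hni : i < n := by
          rw [hgn] at hgt
          exact_mod_cast hgt
        obtain ⟨h1, _⟩ := (gamma_eq_iff b hb hx hy n).mp hgn
        exact agree_le b hb x y (by omega) h1
    have hag : ⌊(b:ℝ)^i * x⌋ = ⌊(b:ℝ)^i * y⌋ := agree_succ b hb x y i hag1
    rw [Vi_eq b i hb hx hy, W_agree b i hb hx hy hag, W_agree b (i+1) hb hx hy hag1,
      hhi, hhip1]
    ring
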